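/- Let A be symmetric, b ∈ ℝ^d with b ≠ 0, ρ > 0, and let s be a global minimizer of f(x) = (1/2)xᵀAx + bᵀx + (ρ/3)‖x‖³. Define the Cauchy radius R_c = −(bᵀAb)/(2ρ‖b‖²) + sqrt(((bᵀAb)/(2ρ‖b‖²))² + ‖b‖/ρ). Then ‖s‖ ≥ R_c. -/

import Mathlib

open Matrix

noncomputable def eNorm {d : ℕ} (x : Fin d → ℝ) : ℝ := Real.sqrt (x ⬝ᵥ x)

lemma dot_self_nonneg' {d : ℕ} (x : Fin d → ℝ) : 0 ≤ x ⬝ᵥ x :=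
  Finset.sum_nonneg fun _ _ => mul_self_nonneg _

lemma eNorm_nonneg' {d : ℕ} (x : Fin d → ℝ) : 0 ≤ eNorm x := Real.sqrt_nonneg _

lemma eNorm_sq' {d : ℕ} (x : Fin d → ℝ) : eNorm x ^ 2 = x ⬝ᵥ x :=
  Real.sq_sqrt (dot_self_nonneg' x)

lemma eNorm_pos' {d : ℕ} {x : Fin d → ℝ} (hx : x ≠ 0) : 0 < eNorm x := by
  apply Real.sqrt_pos.2
  rcases (dot_self_nonneg' x).lt_or_eq with h | h
  · exact h
  · exact absurd (dotProduct_self_eq_zero.1 h.symm) hx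

lemma eNorm_smul' {d : ℕ} (c : ℝ) (x : Fin d → ℝ) :
    eNorm (c • x) = |c| * eNorm x := by
  unfold eNorm
  rw [smul_dotProduct, dotProduct_smul, smul_eq_mul, smul_eq_mul, ← mul_assoc,
    ← sq, Real.sqrt_mul (sq_nonneg c), Real.sqrt_sq_eq_abs]

lemma cs' {d : ℕ} (x y : Fin d → ℝ) : (x ⬝ᵥ y) ^ 2 ≤ (x ⬝ᵥ x) * (y ⬝ᵥ y) := by
  have := Finset.sum_mul_sq_le_sq_mul_sq Finset.univ x y
  simpa [dotProduct, sq] using this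

set_option maxHeartbeats 1000000 in
theorem stmt_2 {d : ℕ} (A : Matrix (Fin d) (Fin d) ℝ) (hA : A.IsSymm)
    (b : Fin d → ℝ) (hb : b ≠ 0) (ρ : ℝ) (hρ : 0 < ρ)
    (f : (Fin d → ℝ) → ℝ)
    (hf : ∀ x, f x = (1/2) * (x ⬝ᵥ A.mulVec x) + b ⬝ᵥ x + (ρ/3) * eNorm x ^ 3)
    (s : Fin d → ℝ)
    (hglob : ∀ x, f s ≤ f x)
    (Rc : ℝ)
    (hRc : Rc = -(b ⬝ᵥ A.mulVec b) / (2 * ρ * eNorm b ^ 2)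
      + Real.sqrt ((b ⬝ᵥ A.mulVec b / (2 * ρ * eNorm b ^ 2))^2 + eNorm b / ρ)) :
    eNorm s ≥ Rc := by
  obtain ⟨β, hβdef⟩ : ∃ β : ℝ, β = eNorm b := ⟨_, rfl⟩
  obtain ⟨σ, hσdef⟩ : ∃ σ : ℝ, σ = eNorm s := ⟨_, rfl⟩
  obtain ⟨a, ha⟩ : ∃ a : ℝ, a = s ⬝ᵥ A.mulVec s := ⟨_, rfl⟩
  obtain ⟨c, hc⟩ : ∃ c : ℝ, c = b ⬝ᵥ s := ⟨_, rfl⟩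
  obtain ⟨α, hα⟩ : ∃ α : ℝ, α = b ⬝ᵥ A.mulVec b := ⟨_, rfl⟩
  have hβ : 0 < β := hβdef ▸ eNorm_pos' hb
  have hσ0 : 0 ≤ σ := hσdef ▸ eNorm_nonneg' s
  have hβne : β ≠ 0 := ne_of_gt hβ
  have hρne : ρ ≠ 0 := ne_of_gt hρ
  -- the restriction of f to the ray through s is a polynomial P
  obtain ⟨P, hP⟩ : ∃ P : ℝ → ℝ,
      P = fun t => (1/2) * a * t ^ 2 + c * t + (ρ/3) * σ ^ 3 * t ^ 3 := ⟨_, rfl⟩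
  have hPt : ∀ t : ℝ, 0 < t → f (t • s) = P t := by
    intro t ht
    have h1 : (t • s) ⬝ᵥ A.mulVec (t • s) = t ^ 2 * a := by
      rw [Matrix.mulVec_smul, smul_dotProduct, dotProduct_smul, ha]
      simp [sq]; ring
    have h2 : b ⬝ᵥ (t • s) = t * c := by rw [dotProduct_smul, hc]; simp
    have h3 : eNorm (t • s) = t * σ := by
      rw [eNorm_smul', abs_of_pos ht, hσdef]
    rw [hf, hP, h1, h2, h3]
    ring
  have hloc : IsLocalMin P 1 := by
    have hmem : Set.Ioi (0:ℝ) ∈ nhds (1:ℝ) := Ioi_mem_nhds one_pos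
    have hP1 : P 1 = f s := by rw [← hPt 1 one_pos]; simp
    filter_upwards [hmem] with t ht
    rw [hP1, ← hPt t ht]
    exact hglob _
  -- first-order condition
  have hderiv : HasDerivAt P (a + c + ρ * σ ^ 3) 1 := by
    rw [hP]
    have h1 : HasDerivAt (fun t : ℝ => (1/2) * a * t ^ 2) ((1/2) * a * (2 * 1 ^ 1)) 1 :=
      (hasDerivAt_pow 2 (1:ℝ)).const_mul _
    have h2 : HasDerivAt (fun t : ℝ => c * t) c 1 := by
      simpa using (hasDerivAt_id (1:ℝ)).const_mul c
    have h3 : HasDerivAt (fun t : ℝ => (ρ/3) * σ ^ 3 * t ^ 3) ((ρ/3) * σ ^ 3 * (3 * 1 ^ 2)) 1 :=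
      (hasDerivAt_pow 3 (1:ℝ)).const_mul _
    have h4 := (h1.add h2).add h3
    refine h4.congr_deriv ?_
    ring
  have hkey : a + c + ρ * σ ^ 3 = 0 := hloc.hasDerivAt_eq_zero hderiv
  -- lower bound on f s via Cauchy–Schwarz
  have hcs : c ^ 2 ≤ β ^ 2 * σ ^ 2 := by
    rw [hc, hβdef, hσdef, eNorm_sq', eNorm_sq']
    exact cs' b s
  have hclb : -(β * σ) ≤ c := by nlinarith [mul_nonneg hβ.le hσ0]
  have hfs : -(1/2) * (β * σ) - (ρ/6) * σ ^ 3 ≤ f s := by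
    rw [hf, ← ha, ← hc, ← hσdef]
    nlinarith [hkey, hclb]
  -- properties of Rc
  obtain ⟨u, hu⟩ : ∃ u : ℝ, u = α / (2 * ρ * β ^ 2) := ⟨_, rfl⟩
  obtain ⟨S, hS⟩ : ∃ S : ℝ, S = Real.sqrt (u ^ 2 + β / ρ) := ⟨_, rfl⟩
  have hRc' : Rc = -u + S := by
    rw [hRc, hS, hu, hα, hβdef, neg_div]
  have hS2 : S ^ 2 = u ^ 2 + β / ρ := by
    rw [hS]; exact Real.sq_sqrt (by positivity)
  have hSnn : 0 ≤ S := hS ▸ Real.sqrt_nonneg _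
  have hβρ : 0 < β / ρ := div_pos hβ hρ
  have hRcpos : 0 < Rc := by
    rw [hRc']
    by_contra h
    push_neg at h
    nlinarith
  -- quadratic identity: ρ β² Rc² + α Rc = β³
  have hquad : ρ * β ^ 2 * Rc ^ 2 + α * Rc = β ^ 3 := by
    have h1 : (Rc + u) ^ 2 = u ^ 2 + β / ρ := by
      have h0 : Rc + u = S := by rw [hRc']; ring
      rw [h0, hS2]
    have h2 : ρ * (Rc ^ 2 + 2 * u * Rc) = β := by
      have h2' : Rc ^ 2 + 2 * u * Rc = β / ρ := by nlinarith
      rw [h2']; field_simp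
    have h3 : 2 * ρ * β ^ 2 * u = α := by
      rw [hu]; field_simp
    linear_combination β ^ 2 * h2 - Rc * h3
  -- value at the Cauchy point
  have hcp : f ((-(Rc / β)) • b) = -(1/2) * (β * Rc) - (ρ/6) * Rc ^ 3 := by
    rw [hf]
    have h1 : ((-(Rc / β)) • b) ⬝ᵥ A.mulVec ((-(Rc / β)) • b) = (Rc / β) ^ 2 * α := by
      rw [Matrix.mulVec_smul, smul_dotProduct, dotProduct_smul, hα]
      simp [sq]; ring
    have h2 : b ⬝ᵥ ((-(Rc / β)) • b) = -(Rc * β) := by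
      rw [dotProduct_smul, smul_eq_mul, ← eNorm_sq', ← hβdef]
      field_simp
    have h3 : eNorm ((-(Rc / β)) • b) = Rc := by
      rw [eNorm_smul', abs_neg, abs_of_pos (div_pos hRcpos hβ), ← hβdef]
      field_simp
    have hexp : (Rc / β) ^ 2 * α = Rc * β - ρ * Rc ^ 3 := by
      rw [div_pow, div_mul_eq_mul_div, div_eq_iff (pow_ne_zero 2 hβne)]
      linear_combination Rc * hquad
    rw [h1, h2, h3, hexp]
    ring
  -- combine
  have hcomb : -(1/2) * (β * σ) - (ρ/6) * σ ^ 3 ≤ -(1/2) * (β * Rc) - (ρ/6) * Rc ^ 3 :=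
    calc -(1/2) * (β * σ) - (ρ/6) * σ ^ 3 ≤ f s := hfs
    _ ≤ f ((-(Rc / β)) • b) := hglob _
    _ = -(1/2) * (β * Rc) - (ρ/6) * Rc ^ 3 := hcp
  rw [← hσdef]
  by_contra h
  push_neg at h
  nlinarith [mul_pos hβ (sub_pos.2 h), mul_pos hρ (sub_pos.2 h), sq_nonneg (σ + Rc),
    sq_nonneg σ, mul_pos hρ hRcpos]
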